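/- Let a, b, s > 0 and let 0 ≤ t ≤ √(ab). If s⁻¹ a + s b ≤ 2√(ab) + t, then |s − √(a/b)| ≤ (3 (ab)^{1/4} / b) √t. -/

import Mathlib

/-- Lemma (square-completion estimate): if `a, b, s > 0`, `0 ≤ t ≤ √(ab)` and
`s⁻¹ a + s b ≤ 2√(ab) + t`, then `|s − √(a/b)| ≤ (3 (ab)^{1/4} / b) √t`. -/
theorem square_completion (a b s t : ℝ) (ha : 0 < a) (hb : 0 < b) (hs : 0 < s)
    (ht0 : 0 ≤ t) (ht1 : t ≤ Real.sqrt (a * b))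
    (h : s⁻¹ * a + s * b ≤ 2 * Real.sqrt (a * b) + t) :
    |s - Real.sqrt (a / b)| ≤ 3 * (a * b) ^ ((1 : ℝ) / 4) / b * Real.sqrt t := by
  have hab : 0 < a * b := mul_pos ha hb
  set r := Real.sqrt (a / b) with hrdef
  have hr2 : r ^ 2 = a / b := Real.sq_sqrt (div_pos ha hb).le
  have hbr2 : b * r ^ 2 = a := by rw [hr2]; field_simp
  have hbr : b * r = Real.sqrt (a * b) := by
    rw [hrdef, ← Real.sqrt_sq hb.le, ← Real.sqrt_mul (by positivity)]
    congr 1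
    field_simp
    rw [Real.sq_sqrt (by positivity)]
  have hmul : a + s ^ 2 * b ≤ (2 * Real.sqrt (a * b) + t) * s := by
    have := mul_le_mul_of_nonneg_right h hs.le
    calc a + s ^ 2 * b = (s⁻¹ * a + s * b) * s := by field_simp
      _ ≤ _ := this
  have key : b * (s - r) ^ 2 ≤ s * t := by nlinarith [hbr, hbr2]
  have hsb : s * b ≤ 3 * Real.sqrt (a * b) := by
    have h1 : 0 < s⁻¹ * a := by positivity
    nlinarith
  set q := (a * b) ^ ((1 : ℝ) / 4) with hq
  have hq2 : q ^ 2 = Real.sqrt (a * b) := by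
    rw [hq, ← Real.rpow_natCast _ 2, ← Real.rpow_mul hab.le, Real.sqrt_eq_rpow]
    norm_num
  have hq0 : 0 ≤ q := by positivity
  set u := Real.sqrt t with hu
  have hu2 : u ^ 2 = t := Real.sq_sqrt ht0
  have hu0 : 0 ≤ u := Real.sqrt_nonneg t
  have hX0 : 0 ≤ 3 * q / b * u := by positivity
  have hsq : (s - r) ^ 2 ≤ (3 * q / b * u) ^ 2 := by
    have hexp : (3 * q / b * u) ^ 2 = 9 * (q ^ 2) * (u ^ 2) / b ^ 2 := by ring
    rw [hexp, hq2, hu2, le_div_iff₀ (by positivity : (0:ℝ) < b ^ 2)]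
    have h1 := mul_le_mul_of_nonneg_right key hb.le
    have h2 := mul_le_mul_of_nonneg_right hsb ht0
    nlinarith [Real.sqrt_nonneg (a * b)]
  have hfin := Real.sqrt_le_sqrt hsq
  rwa [Real.sqrt_sq_eq_abs, Real.sqrt_sq hX0] at hfin
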